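/- Let R_0 = 1 and R_n = (1-β_n)² + β_n R_{n-1} with β_n = n/(n+2). Then R_n = (4/(n+1))·(1 - H_{n+2}/(n+2)), where H_m = Σ_{k=1}^m 1/k is the m-th harmonic number. -/
import Mathlib


/-- For β_n = n/(n+2), the sequence R₀ = 1,
R_n = (1-β_n)² + β_n R_{n-1} satisfies R_n = (4/(n+1))(1 - H_{n+2}/(n+2)),
where H_m = Σ_{k=1}^m 1/k is the m-th harmonic number. -/
theorem stmt11 (R : ℕ → ℝ) (hR0 : R 0 = 1)
    (hRrec : ∀ n : ℕ, 1 ≤ n →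
      R n = (1 - (n : ℝ)/((n : ℝ) + 2))^2 + ((n : ℝ)/((n : ℝ) + 2)) * R (n-1)) :
    ∀ n : ℕ, R n = (4/((n : ℝ) + 1)) *
      (1 - (∑ k ∈ Finset.range (n+2), 1/((k : ℝ) + 1))/((n : ℝ) + 2)) := by
  intro n
  induction n with
  | zero =>
    simp [hR0, Finset.sum_range_succ]
    norm_num
  | succ n ih =>
    have h := hRrec (n+1) (Nat.le_add_left 1 n)
    simp only [Nat.add_sub_cancel] at h
    rw [h, ih]
    have hs : ∑ k ∈ Finset.range (n+1+2), 1/((k : ℝ) + 1)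
        = (∑ k ∈ Finset.range (n+2), 1/((k : ℝ) + 1)) + 1/((n : ℝ) + 3) := by
      rw [show n + 1 + 2 = (n + 2) + 1 from rfl, Finset.sum_range_succ]
      push_cast; norm_num; ring
    rw [hs]
    set S := ∑ k ∈ Finset.range (n+2), 1/((k : ℝ) + 1) with hS
    push_cast
    have h1 : (n : ℝ) + 1 ≠ 0 := by positivity
    have h2 : (n : ℝ) + 2 ≠ 0 := by positivity
    have h3 : (n : ℝ) + 3 ≠ 0 := by positivity
    field_simp
    ring
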